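/- Let u ≥ 0 be a real number and k a natural number with k·u < 1. Suppose δ₁, …, δ_k are real numbers with |δᵢ| ≤ u for each i, and ρ₁, …, ρ_k ∈ {1, −1}. Then |∏_{i=1}^k (1+δᵢ)^{ρᵢ} − 1| ≤ k·u/(1 − k·u); that is, the product equals 1 + θ_k for some θ_k with |θ_k| ≤ γ_k(u). -/

import Mathlib

/-- For `u ≥ 0` and `t` with `t·u < 1`, `γ_t(u) := t·u/(1 − t·u)`. -/
noncomputable def gam (t u : ℝ) : ℝ := t * u / (1 - t * u)

/-- If `|δᵢ| ≤ u` and `ρᵢ = ±1` for `i = 1, …, k`, and `k·u < 1`, then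
`∏ (1+δᵢ)^{ρᵢ} = 1 + θ` with `|θ| ≤ γ_k(u) = k·u/(1−k·u)`. -/
theorem stmt_0 (u : ℝ) (hu : 0 ≤ u) (k : ℕ) (hk : (k : ℝ) * u < 1)
    (δ : Fin k → ℝ) (hδ : ∀ i, |δ i| ≤ u)
    (ρ : Fin k → ℤ) (hρ : ∀ i, ρ i = 1 ∨ ρ i = -1) :
    |(∏ i, (1 + δ i) ^ (ρ i)) - 1| ≤ gam k u := by
  rcases Nat.eq_zero_or_pos k with hk0 | hk1
  · subst hk0; simp [gam]
  have hk1' : (1:ℝ) ≤ k := by exact_mod_cast hk1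
  have hu1 : u < 1 := lt_of_le_of_lt (le_mul_of_one_le_left hu hk1') hk
  have h1u : (0:ℝ) < 1 - u := by linarith
  have hku : (0:ℝ) < 1 - (k:ℝ)*u := by linarith
  have hfac : ∀ i, (1 - u) ≤ (1 + δ i)^(ρ i) ∧ (1 + δ i)^(ρ i) ≤ 1/(1-u) := by
    intro i
    have h1 : -u ≤ δ i := (abs_le.mp (hδ i)).1
    have h2 : δ i ≤ u := (abs_le.mp (hδ i)).2
    have hp : 0 < 1 + δ i := by linarith
    rcases hρ i with h | h
    · rw [h, zpow_one]
      refine ⟨by linarith, ?_⟩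
      rw [le_div_iff₀ h1u]; nlinarith
    · rw [h, zpow_neg_one]
      have hmul : (1 + δ i) * (1 + δ i)⁻¹ = 1 := mul_inv_cancel₀ hp.ne'
      have hinvpos : 0 < (1 + δ i)⁻¹ := inv_pos.mpr hp
      constructor
      · nlinarith
      · rw [one_div]
        exact inv_anti₀ h1u (by linarith)
  have hnn : ∀ i, (0:ℝ) ≤ (1 + δ i)^(ρ i) := fun i => by linarith [(hfac i).1]
  have hPle : (∏ i, (1+δ i)^(ρ i)) ≤ (1/(1-u))^k := by
    calc ∏ i, (1+δ i)^(ρ i) ≤ ∏ _i : Fin k, (1/(1-u)) :=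
          Finset.prod_le_prod (fun i _ => hnn i) (fun i _ => (hfac i).2)
      _ = (1/(1-u))^k := by simp
  have hPge : (1-u)^k ≤ ∏ i, (1+δ i)^(ρ i) := by
    calc (1-u)^k = ∏ _i : Fin k, (1-u) := by simp
      _ ≤ _ := Finset.prod_le_prod (fun i _ => by linarith) (fun i _ => (hfac i).1)
  have hbern : 1 - (k:ℝ)*u ≤ (1-u)^k := by
    have := one_add_mul_le_pow (a := -u) (by linarith) k
    calc 1 - (k:ℝ)*u = 1 + (k:ℝ) * (-u) := by ring
      _ ≤ (1 + -u)^k := this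
      _ = (1-u)^k := by ring_nf
  have hpowpos : (0:ℝ) < (1-u)^k := pow_pos h1u k
  have hup : (1/(1-u))^k ≤ 1/(1 - (k:ℝ)*u) := by
    rw [one_div_pow]
    exact one_div_le_one_div_of_le hku hbern
  rw [abs_le, gam]
  constructor
  · have hgam : (k:ℝ)*u ≤ (k:ℝ)*u/(1-(k:ℝ)*u) := by
      rw [le_div_iff₀ hku]; nlinarith [sq_nonneg ((k:ℝ)*u)]
    nlinarith
  · have : 1/(1-(k:ℝ)*u) - 1 = (k:ℝ)*u/(1-(k:ℝ)*u) := by field_simp; ring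
    nlinarith [hPle, hup]
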